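/- arXiv:1208.5101 — 3 statements merged into one kernel-verified Lean document; each statement's English description precedes it below -/
import Mathlib

section
/- If ρ_{BC} = ρ_L ⊗ |ψ⟩⟨ψ|_{RC} where H_B = H_L ⊗ H_R, ρ_L is a density matrix on H_L, and |ψ⟩ is a unit vector in H_R ⊗ H_C, then S(ρ_{BC}) = S(ρ_B) − S(ρ_C), where ρ_B = Tr_C ρ_{BC} and ρ_C = Tr_B ρ_{BC}. (Sufficiency direction of the Araki–Lieb saturation condition.) -/
open Matrix Kronecker BigOperators
open scoped ComplexOrder

noncomputable section

open Polynomial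

/-- Partial trace over the second (right) tensor factor. -/
def ptraceRight {m n : Type*} [Fintype n]
    (ρ : Matrix (m × n) (m × n) ℂ) : Matrix m m ℂ :=
  fun i j => ∑ k : n, ρ (i, k) (j, k)

/-- Partial trace over the first (left) tensor factor. -/
def ptraceLeft {m n : Type*} [Fintype m]
    (ρ : Matrix (m × n) (m × n) ℂ) : Matrix n n ℂ :=
  fun i j => ∑ k : m, ρ (k, i) (k, j)

/-- Partial trace of a tripartite state over the last factor. -/
def trC {a b c : Type*} [Fintype c]
    (ρ : Matrix (a × b × c) (a × b × c) ℂ) : Matrix (a × b) (a × b) ℂ :=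
  fun i j => ∑ k : c, ρ (i.1, i.2, k) (j.1, j.2, k)

/-- Partial trace of a tripartite state over the first and last factors. -/
def trAC {a b c : Type*} [Fintype a] [Fintype c]
    (ρ : Matrix (a × b × c) (a × b × c) ℂ) : Matrix b b ℂ :=
  fun i j => ∑ x : a, ∑ k : c, ρ (x, i, k) (x, j, k)

/-- A density matrix: positive semidefinite with unit trace. -/
def IsDensity {n : Type*} [Fintype n] (ρ : Matrix n n ℂ) : Prop :=
  ρ.PosSemidef ∧ ρ.trace = 1

/-- Von Neumann entropy `S(ρ) = -Tr (ρ log ρ)`, computed from the eigenvalues. -/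
def vNEntropy {n : Type*} [Fintype n] [DecidableEq n] (ρ : Matrix n n ℂ) : ℝ :=
  if h : ρ.IsHermitian then -∑ i, (h.eigenvalues i * Real.log (h.eigenvalues i)) else 0

/-- `Φ ⊗ 1` : a map on the first tensor factor extended by the identity. -/
def tensorId {h h' k : Type*}
    (Φ : Matrix h h ℂ → Matrix h' h' ℂ)
    (ρ : Matrix (h × k) (h × k) ℂ) : Matrix (h' × k) (h' × k) ℂ :=
  fun i j => Φ (fun x y => ρ (x, i.2) (y, j.2)) i.1 j.1

/-- `1 ⊗ Φ` : a map on the second tensor factor extended by the identity. -/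
def idTensor {h h' k : Type*}
    (Φ : Matrix h h ℂ → Matrix h' h' ℂ)
    (ρ : Matrix (k × h) (k × h) ℂ) : Matrix (k × h') (k × h') ℂ :=
  fun i j => Φ (fun x y => ρ (i.1, x) (j.1, y)) i.2 j.2

/-- A quantum channel: linear, trace preserving and completely positive map. -/
structure QChannel (m n : Type*) [Fintype m] [Fintype n] where
  map : Matrix m m ℂ → Matrix n n ℂ
  linear : ∀ (a b : ℂ) (ρ σ : Matrix m m ℂ), map (a • ρ + b • σ) = a • map ρ + b • map σ
  trace_preserving : ∀ ρ : Matrix m m ℂ, (map ρ).trace = ρ.trace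
  completely_positive : ∀ (d : ℕ) (ρ : Matrix (m × Fin d) (m × Fin d) ℂ),
    ρ.PosSemidef → (tensorId map ρ).PosSemidef

/-- Pure state projector `|v⟩⟨v|`. -/
def proj {n : Type*} (v : n → ℂ) : Matrix n n ℂ := Matrix.vecMulVec v (star v)

/-- Unit vector. -/
def IsUnit' {n : Type*} [Fintype n] (v : n → ℂ) : Prop := ∑ i, Complex.normSq (v i) = 1


theorem charpoly_mul_X_pow {α β : Type*} [Fintype α] [Fintype β] [DecidableEq α] [DecidableEq β]
    {K : Type*} [Field K] (A : Matrix α β K) (B : Matrix β α K) :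
    (A * B).charpoly * X ^ (Fintype.card β) = (B * A).charpoly * X ^ (Fintype.card α) := by
  set R := Polynomial K
  set A' : Matrix α β R := A.map C with hA'
  set B' : Matrix β α R := B.map C with hB'
  have key :
      (fromBlocks (1 : Matrix α α R) A' 0 (1 : Matrix β β R)) *
        (fromBlocks ((X:R) • (1 : Matrix α α R) - A' * B') 0 B' ((X:R) • (1 : Matrix β β R)))
      = (fromBlocks ((X:R) • (1 : Matrix α α R)) 0 B' ((X:R) • (1 : Matrix β β R) - B' * A')) *
        (fromBlocks (1 : Matrix α α R) A' 0 (1 : Matrix β β R)) := by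
    rw [Matrix.fromBlocks_multiply, Matrix.fromBlocks_multiply]
    simp [Matrix.mul_sub, Matrix.sub_mul, Matrix.mul_smul, Matrix.smul_mul]
  have hdet := congrArg Matrix.det key
  simp only [Matrix.det_mul, Matrix.det_fromBlocks_zero₂₁, Matrix.det_fromBlocks_zero₁₂,
    Matrix.det_one, one_mul, mul_one, Matrix.det_smul, smul_eq_mul] at hdet
  have hAB : (A * B).charpoly = Matrix.det ((X:R) • (1 : Matrix α α R) - A' * B') := by
    rw [charpoly, charmatrix, scalar_apply, RingHom.mapMatrix_apply, Matrix.map_mul]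
    congr 1
    rw [Matrix.smul_one_eq_diagonal]
  have hBA : (B * A).charpoly = Matrix.det ((X:R) • (1 : Matrix β β R) - B' * A') := by
    rw [charpoly, charmatrix, scalar_apply, RingHom.mapMatrix_apply, Matrix.map_mul]
    congr 1
    rw [Matrix.smul_one_eq_diagonal]
  rw [hAB, hBA]
  linear_combination hdet

theorem charpoly_mul_comm' {n : Type*} [Fintype n] [DecidableEq n] {K : Type*} [Field K]
    (A B : Matrix n n K) : (A * B).charpoly = (B * A).charpoly :=
  mul_right_cancel₀ (pow_ne_zero _ Polynomial.X_ne_zero) (charpoly_mul_X_pow A B)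

theorem charpoly_diag {n : Type*} [Fintype n] [DecidableEq n] (d : n → ℂ) :
    Matrix.charpoly (Matrix.diagonal d) = ∏ i, (X - C (d i)) := by
  rw [charpoly, charmatrix, scalar_apply, RingHom.mapMatrix_apply, Matrix.diagonal_map (by simp),
    Matrix.diagonal_sub, Matrix.det_diagonal]

/-- Unitary conjugation invariance of charpoly. -/
theorem charpoly_unitary_conj {n : Type*} [Fintype n] [DecidableEq n]
    (U A : Matrix n n ℂ) (hU : star U * U = 1) :
    (U * A * star U).charpoly = A.charpoly := by
  rw [_root_.charpoly_mul_comm' (U * A) (star U), ← mul_assoc, hU, one_mul]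

theorem herm_charpoly {n : Type*} [Fintype n] [DecidableEq n] {A : Matrix n n ℂ}
    (hA : A.IsHermitian) :
    A.charpoly = ∏ i, (X - C ((hA.eigenvalues i : ℂ))) := by
  calc A.charpoly
      = ((hA.eigenvectorUnitary : Matrix n n ℂ) * Matrix.diagonal (RCLike.ofReal ∘ hA.eigenvalues)
          * star (hA.eigenvectorUnitary : Matrix n n ℂ)).charpoly := by rw [← Unitary.conjStarAlgAut_apply (S := ℂ), ← hA.spectral_theorem]
    _ = (Matrix.diagonal (RCLike.ofReal ∘ hA.eigenvalues)).charpoly :=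
        charpoly_unitary_conj _ _ (Unitary.coe_star_mul_self _)
    _ = _ := charpoly_diag _

theorem herm_roots {n : Type*} [Fintype n] [DecidableEq n] {A : Matrix n n ℂ}
    (hA : A.IsHermitian) :
    A.charpoly.roots = (Finset.univ.val.map fun i => ((hA.eigenvalues i : ℂ))) := by
  rw [herm_charpoly hA, ← Polynomial.roots_multiset_prod_X_sub_C
      (Finset.univ.val.map fun i => ((hA.eigenvalues i : ℂ)))]
  congr 1
  rw [Multiset.map_map]
  rfl

theorem herm_sum_g {n : Type*} [Fintype n] [DecidableEq n] {A : Matrix n n ℂ}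
    (hA : A.IsHermitian) (g : ℂ → ℝ) :
    (A.charpoly.roots.map g).sum = ∑ i, g ((hA.eigenvalues i : ℂ)) := by
  rw [herm_roots hA, Multiset.map_map]
  rfl

/-- Eigenvalue sums agree for any `f` when the charpolys agree up to powers of `X`,
provided `f 0 = 0`. -/
theorem sum_f_eig_of_charpoly_pad {n m : Type*} [Fintype n] [Fintype m]
    [DecidableEq n] [DecidableEq m] {A : Matrix n n ℂ} {B : Matrix m m ℂ}
    (hA : A.IsHermitian) (hB : B.IsHermitian) {k l : ℕ}
    (h : A.charpoly * X ^ k = B.charpoly * X ^ l)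
    (f : ℝ → ℝ) (hf : f 0 = 0) :
    ∑ i, f (hA.eigenvalues i) = ∑ j, f (hB.eigenvalues j) := by
  set g : ℂ → ℝ := fun z => f z.re with hg
  have hg0 : g 0 = 0 := by simp [hg, hf]
  have hroots : A.charpoly.roots + (X ^ k : Polynomial ℂ).roots
      = B.charpoly.roots + (X ^ l : Polynomial ℂ).roots := by
    rw [← Polynomial.roots_mul (mul_ne_zero A.charpoly_monic.ne_zero (pow_ne_zero _ X_ne_zero)),
      ← Polynomial.roots_mul (mul_ne_zero B.charpoly_monic.ne_zero (pow_ne_zero _ X_ne_zero)), h]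
  have hsum := congrArg (fun s : Multiset ℂ => (s.map g).sum) hroots
  simp only [Multiset.map_add, Multiset.sum_add, Polynomial.roots_pow, Polynomial.roots_X,
    Multiset.map_nsmul, Multiset.sum_nsmul] at hsum
  rw [herm_sum_g hA g, herm_sum_g hB g] at hsum
  simpa [hg0, hg, hf] using hsum
  
/-- If the charpoly of Hermitian `A` is `∏ (X - d j)` then `∑ f(eig) = ∑ f(d)` for all `f`. -/
theorem sum_f_eig_of_charpoly_eq_prod {n m : Type*} [Fintype n] [Fintype m]
    [DecidableEq n] {A : Matrix n n ℂ} (hA : A.IsHermitian) (d : m → ℝ)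
    (h : A.charpoly = ∏ j, (X - C ((d j : ℂ)))) (f : ℝ → ℝ) :
    ∑ i, f (hA.eigenvalues i) = ∑ j, f (d j) := by
  set g : ℂ → ℝ := fun z => f z.re with hg
  have h2 : A.charpoly.roots = (Finset.univ.val.map fun j => ((d j : ℂ))) := by
    rw [h, ← Polynomial.roots_multiset_prod_X_sub_C
      (Finset.univ.val.map fun j => ((d j : ℂ)))]
    congr 1
    rw [Multiset.map_map]
    rfl
  have hsum := congrArg (fun s : Multiset ℂ => (s.map g).sum) h2
  rw [herm_sum_g hA g] at hsum
  calc ∑ i, f (hA.eigenvalues i) = ∑ i, g ((hA.eigenvalues i : ℂ)) := by simp [hg]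
    _ = (Multiset.map g (Multiset.map (fun j => ((d j : ℂ))) Finset.univ.val)).sum := hsum
    _ = ∑ j, g ((d j : ℂ)) := by rw [Multiset.map_map]; rfl
    _ = ∑ j, f (d j) := by simp [hg]

/-- trace of Hermitian is sum of eigenvalues. -/
theorem herm_trace {n : Type*} [Fintype n] [DecidableEq n] {A : Matrix n n ℂ}
    (hA : A.IsHermitian) : A.trace = ((∑ i, hA.eigenvalues i : ℝ) : ℂ) := by
  calc A.trace = ((hA.eigenvectorUnitary : Matrix n n ℂ)
        * Matrix.diagonal (RCLike.ofReal ∘ hA.eigenvalues)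
        * star (hA.eigenvectorUnitary : Matrix n n ℂ)).trace := by rw [← Unitary.conjStarAlgAut_apply (S := ℂ), ← hA.spectral_theorem]
    _ = (Matrix.diagonal (RCLike.ofReal ∘ hA.eigenvalues)).trace := by
        rw [Matrix.trace_mul_comm, ← mul_assoc, Unitary.coe_star_mul_self, one_mul]
    _ = _ := by
        rw [Matrix.trace_diagonal]
        push_cast
        rfl

-- Hermitian kronecker
theorem kron_conjTranspose {l m n p : Type*} (A : Matrix l m ℂ) (B : Matrix n p ℂ) :
    (A ⊗ₖ B)ᴴ = Aᴴ ⊗ₖ Bᴴ := by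
  ext ⟨i, j⟩ ⟨k, r⟩
  simp [Matrix.conjTranspose_apply]

theorem kron_hermitian {n m : Type*} {A : Matrix n n ℂ} {B : Matrix m m ℂ}
    (hA : A.IsHermitian) (hB : B.IsHermitian) : (A ⊗ₖ B).IsHermitian := by
  unfold Matrix.IsHermitian
  rw [kron_conjTranspose, hA.eq, hB.eq]

theorem charpoly_kron {n m : Type*} [Fintype n] [Fintype m] [DecidableEq n] [DecidableEq m]
    {A : Matrix n n ℂ} {B : Matrix m m ℂ} (hA : A.IsHermitian) (hB : B.IsHermitian) :
    (A ⊗ₖ B).charpoly = ∏ p : n × m,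
      (X - C (((hA.eigenvalues p.1 * hB.eigenvalues p.2 : ℝ) : ℂ))) := by
  set U : Matrix n n ℂ := (hA.eigenvectorUnitary : Matrix n n ℂ)
  set V : Matrix m m ℂ := (hB.eigenvectorUnitary : Matrix m m ℂ)
  set DA : Matrix n n ℂ := Matrix.diagonal (RCLike.ofReal ∘ hA.eigenvalues)
  set DB : Matrix m m ℂ := Matrix.diagonal (RCLike.ofReal ∘ hB.eigenvalues)
  have hAB : A ⊗ₖ B = (U ⊗ₖ V) * (DA ⊗ₖ DB) * star (U ⊗ₖ V) := by
    rw [Matrix.star_eq_conjTranspose, kron_conjTranspose,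
      ← Matrix.mul_kronecker_mul, ← Matrix.mul_kronecker_mul]
    conv_lhs => rw [hA.spectral_theorem, hB.spectral_theorem]
    rfl
  have hunit : star (U ⊗ₖ V) * (U ⊗ₖ V) = 1 := by
    have hU : Uᴴ * U = 1 := by
      rw [← Matrix.star_eq_conjTranspose]; exact Unitary.coe_star_mul_self _
    have hV : Vᴴ * V = 1 := by
      rw [← Matrix.star_eq_conjTranspose]; exact Unitary.coe_star_mul_self _
    rw [Matrix.star_eq_conjTranspose, kron_conjTranspose, ← Matrix.mul_kronecker_mul,
      hU, hV, Matrix.one_kronecker_one]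
  rw [hAB, charpoly_unitary_conj _ _ hunit]
  have : DA ⊗ₖ DB = Matrix.diagonal (fun p : n × m =>
      ((hA.eigenvalues p.1 * hB.eigenvalues p.2 : ℝ) : ℂ)) := by
    rw [Matrix.diagonal_kronecker_diagonal]
    congr 1
    ext p
    push_cast
    rfl
  rw [this, charpoly_diag]

-- the entropy function
theorem f_mul_nonneg {x y : ℝ} (hx : 0 ≤ x) (hy : 0 ≤ y)
    (f : ℝ → ℝ) (hf : f = fun t => t * Real.log t) :
    f (x * y) = y * f x + x * f y := by
  subst hf
  rcases eq_or_lt_of_le hx with h | hx'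
  · simp [← h]
  rcases eq_or_lt_of_le hy with h | hy'
  · simp [← h]
  simp only
  rw [Real.log_mul hx'.ne' hy'.ne']
  ring

theorem sum_f_kron {n m : Type*} [Fintype n] [Fintype m] [DecidableEq n] [DecidableEq m]
    {A : Matrix n n ℂ} {B : Matrix m m ℂ} (hA : A.IsHermitian) (hB : B.IsHermitian)
    (hK : (A ⊗ₖ B).IsHermitian)
    (ha : ∀ i, 0 ≤ hA.eigenvalues i) (hb : ∀ j, 0 ≤ hB.eigenvalues j)
    (f : ℝ → ℝ) (hf : f = fun t => t * Real.log t) :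
    ∑ p, f (hK.eigenvalues p) =
      (∑ j, hB.eigenvalues j) * (∑ i, f (hA.eigenvalues i))
        + (∑ i, hA.eigenvalues i) * (∑ j, f (hB.eigenvalues j)) := by
  have h1 := sum_f_eig_of_charpoly_eq_prod hK
    (fun p : n × m => hA.eigenvalues p.1 * hB.eigenvalues p.2) (charpoly_kron hA hB) f
  rw [h1, ← Finset.univ_product_univ, Finset.sum_product]
  have hid : ∀ i j, f (hA.eigenvalues i * hB.eigenvalues j)
      = hB.eigenvalues j * f (hA.eigenvalues i) + hA.eigenvalues i * f (hB.eigenvalues j) :=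
    fun i j => f_mul_nonneg (ha i) (hb j) f hf
  simp_rw [hid, Finset.sum_add_distrib, ← Finset.mul_sum, ← Finset.sum_mul, ← Finset.mul_sum]


theorem herm_trace_sq {n : Type*} [Fintype n] [DecidableEq n] {A : Matrix n n ℂ}
    (hA : A.IsHermitian) : (A * A).trace = ((∑ i, (hA.eigenvalues i)^2 : ℝ) : ℂ) := by
  set U : Matrix n n ℂ := (hA.eigenvectorUnitary : Matrix n n ℂ)
  set D : Matrix n n ℂ := Matrix.diagonal (RCLike.ofReal ∘ hA.eigenvalues)
  have hU : star U * U = 1 := Unitary.coe_star_mul_self _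
  have h : A * A = U * (D * D) * star U := by
    conv_lhs => rw [hA.spectral_theorem]
    show (U * D * star U) * (U * D * star U) = _
    rw [Matrix.mul_assoc (U*D) (star U) _, ← Matrix.mul_assoc (star U) (U * D) (star U),
      ← Matrix.mul_assoc (star U) U D, hU, one_mul]
    noncomm_ring
  rw [h, Matrix.trace_mul_comm, ← Matrix.mul_assoc, hU, one_mul]
  rw [Matrix.diagonal_mul_diagonal, Matrix.trace_diagonal]
  push_cast
  simp [pow_two]

theorem proj_posSemidef {n : Type*} [Fintype n] (v : n → ℂ) : (proj v).PosSemidef := by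
  have : proj v = Matrix.replicateCol (Fin 1) v * (Matrix.replicateCol (Fin 1) v)ᴴ := by
    ext i j
    simp [proj, Matrix.vecMulVec_apply, Matrix.mul_apply]
  rw [this]
  exact Matrix.posSemidef_self_mul_conjTranspose _

theorem proj_trace {n : Type*} [Fintype n] (v : n → ℂ) (hv : IsUnit' v) :
    (proj v).trace = 1 := by
  have : ∀ i, proj v i i = (Complex.normSq (v i) : ℂ) := by
    intro i
    simp [proj, Matrix.vecMulVec_apply, Pi.star_apply, Complex.mul_conj]
  rw [Matrix.trace]
  simp only [Matrix.diag_apply, this]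
  rw [← Complex.ofReal_sum, hv, Complex.ofReal_one]

theorem proj_idem {n : Type*} [Fintype n] (v : n → ℂ) (hv : IsUnit' v) :
    proj v * proj v = proj v := by
  ext i j
  have : ∑ k, (starRingEnd ℂ) (v k) * v k = 1 := by
    have : ∀ k, (starRingEnd ℂ) (v k) * v k = (Complex.normSq (v k) : ℂ) := by
      intro k; rw [mul_comm, Complex.mul_conj]
    simp only [this]
    rw [← Complex.ofReal_sum, hv, Complex.ofReal_one]
  simp only [proj, Matrix.mul_apply, Matrix.vecMulVec_apply, Pi.star_apply]
  calc ∑ k, v i * (starRingEnd ℂ) (v k) * (v k * (starRingEnd ℂ) (v j))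
      = (v i * (starRingEnd ℂ) (v j)) * ∑ k, (starRingEnd ℂ) (v k) * v k := by
        rw [Finset.mul_sum]; congr 1; ext k; ring
    _ = v i * (starRingEnd ℂ) (v j) := by rw [this, mul_one]

/-- Entropy-sum of a pure state vanishes. -/
theorem proj_f_sum {n : Type*} [Fintype n] [DecidableEq n] (v : n → ℂ) (hv : IsUnit' v)
    (f : ℝ → ℝ) (hf : f = fun t => t * Real.log t) :
    ∑ i, f ((proj_posSemidef v).1.eigenvalues i) = 0 := by
  set hP := (proj_posSemidef v).1
  set lam := hP.eigenvalues with hlam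
  have hnn : ∀ i, 0 ≤ lam i := (proj_posSemidef v).eigenvalues_nonneg
  have hsum1 : ∑ i, lam i = 1 := by
    have := herm_trace hP
    rw [proj_trace v hv] at this
    exact_mod_cast (Complex.ofReal_eq_one.mp this.symm)
  have hsum2 : ∑ i, (lam i)^2 = 1 := by
    have := herm_trace_sq hP
    rw [proj_idem v hv, proj_trace v hv] at this
    exact_mod_cast (Complex.ofReal_eq_one.mp this.symm)
  have hle : ∀ i, lam i ≤ 1 := by
    intro i
    rw [← hsum1]
    exact Finset.single_le_sum (fun j _ => hnn j) (Finset.mem_univ i)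
  have hzero : ∀ i ∈ Finset.univ, lam i * (1 - lam i) = 0 := by
    have h0 : ∑ i, lam i * (1 - lam i) = 0 := by
      simp only [mul_sub, mul_one, Finset.sum_sub_distrib, ← pow_two, hsum1, hsum2, sub_self]
    intro i hi
    have := (Finset.sum_eq_zero_iff_of_nonneg
      (fun j _ => mul_nonneg (hnn j) (by linarith [hle j]))).mp h0
    exact this i hi
  apply Finset.sum_eq_zero
  intro i _
  have := hzero i (Finset.mem_univ i)
  rcases mul_eq_zero.mp this with h | h
  · simp [hf, h]
  · have : lam i = 1 := by linarith
    simp [hf, this]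

open Polynomial in
theorem charpoly_transpose' {n : Type*} [Fintype n] [DecidableEq n] (M : Matrix n n ℂ) :
    Mᵀ.charpoly = M.charpoly := by
  rw [Matrix.charpoly, Matrix.charpoly, ← Matrix.det_transpose (charmatrix M)]
  congr 1
  rw [charmatrix, charmatrix, RingHom.mapMatrix_apply, RingHom.mapMatrix_apply,
    Matrix.transpose_sub, Matrix.transpose_map, Matrix.scalar_apply, Matrix.diagonal_transpose]

theorem trace_one_eig_sum {n : Type*} [Fintype n] [DecidableEq n] {A : Matrix n n ℂ}
    (hA : A.IsHermitian) (ht : A.trace = 1) : ∑ i, hA.eigenvalues i = 1 := by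
  have := herm_trace hA
  rw [ht] at this
  exact_mod_cast (Complex.ofReal_eq_one.mp this.symm)

theorem vN_eq {n : Type*} [Fintype n] [DecidableEq n] {A : Matrix n n ℂ} (h : A.IsHermitian) :
    vNEntropy A = -∑ i, (h.eigenvalues i * Real.log (h.eigenvalues i)) := by
  rw [vNEntropy, dif_pos h]

/-- sufficiency direction of the Araki–Lieb saturation condition. -/
theorem arakiLieb_saturation_of_product {L R C : Type*}
    [Fintype L] [Fintype R] [Fintype C] [DecidableEq L] [DecidableEq R] [DecidableEq C]
    (ρL : Matrix L L ℂ) (hρL : IsDensity ρL)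
    (ψ : R × C → ℂ) (hψ : IsUnit' ψ)
    (ρBC : Matrix ((L × R) × C) ((L × R) × C) ℂ)
    (hρBC : ρBC = Matrix.reindex (Equiv.prodAssoc L R C).symm (Equiv.prodAssoc L R C).symm
        (ρL ⊗ₖ proj ψ)) :
    vNEntropy ρBC = vNEntropy (ptraceRight ρBC) - vNEntropy (ptraceLeft ρBC) := by
  classical
  set f : ℝ → ℝ := fun t => t * Real.log t with hfdef
  have hf0 : f 0 = 0 := by simp [hfdef]
  set e := Equiv.prodAssoc L R C with he
  have hL : ρL.IsHermitian := hρL.1.1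
  have hLnn := hρL.1.eigenvalues_nonneg
  have hLsum : ∑ i, hL.eigenvalues i = 1 := trace_one_eig_sum hL hρL.2
  have hP : (proj ψ).IsHermitian := (proj_posSemidef ψ).1
  have hPnn := (proj_posSemidef ψ).eigenvalues_nonneg
  have hPsum : ∑ i, hP.eigenvalues i = 1 := trace_one_eig_sum hP (proj_trace ψ hψ)
  have hPf : ∑ i, f (hP.eigenvalues i) = 0 := proj_f_sum ψ hψ f hfdef
  have hK : (ρL ⊗ₖ proj ψ).IsHermitian := kron_hermitian hL hP
  have hBCH : ρBC.IsHermitian := by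
    rw [hρBC, Matrix.reindex_apply]
    exact (Matrix.isHermitian_submatrix_equiv e).mpr hK
  -- LHS
  have hchar : ρBC.charpoly = (ρL ⊗ₖ proj ψ).charpoly := by
    rw [hρBC]; exact Matrix.charpoly_reindex _ _
  have hsumBC : ∑ i, f (hBCH.eigenvalues i) = ∑ i, f (hK.eigenvalues i) :=
    sum_f_eig_of_charpoly_pad hBCH hK (k := 0) (l := 0) (by simpa using hchar) f hf0
  have hsumK : ∑ p, f (hK.eigenvalues p) = ∑ i, f (hL.eigenvalues i) := by
    rw [sum_f_kron hL hP hK hLnn hPnn f hfdef, hPsum, hLsum, hPf]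
    ring
  -- the Schmidt matrix
  set M : Matrix R C ℂ := fun r c => ψ (r, c) with hM
  have hσR : (M * Mᴴ).IsHermitian := Matrix.isHermitian_mul_conjTranspose_self M
  have hσRnn := (Matrix.posSemidef_self_mul_conjTranspose M).eigenvalues_nonneg
  have hσC : ((Mᴴ * M)ᵀ).IsHermitian :=
    (Matrix.isHermitian_conjTranspose_mul_self M).transpose
  have hσRtr : (M * Mᴴ).trace = 1 := by
    have step : (M * Mᴴ).trace = ∑ p : R × C, (Complex.normSq (ψ p) : ℂ) := by
      rw [Matrix.trace]
      simp only [Matrix.diag_apply, Matrix.mul_apply, Matrix.conjTranspose_apply, hM]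
      rw [Fintype.sum_prod_type]
      refine Finset.sum_congr rfl fun r _ => Finset.sum_congr rfl fun c _ => ?_
      rw [← Complex.mul_conj]; rfl
    rw [step, ← Complex.ofReal_sum, hψ, Complex.ofReal_one]
  have hσRsum : ∑ i, hσR.eigenvalues i = 1 := trace_one_eig_sum hσR hσRtr
  -- reduced states
  have hTrR : ptraceRight ρBC = ρL ⊗ₖ (M * Mᴴ) := by
    rw [hρBC]
    ext ⟨l, r⟩ ⟨l', r'⟩
    simp only [ptraceRight, Matrix.reindex_apply, Matrix.submatrix_apply, Equiv.symm_symm, he,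
      Equiv.prodAssoc_apply, Matrix.kroneckerMap_apply, proj, Matrix.vecMulVec_apply,
      Pi.star_apply, Matrix.mul_apply, Matrix.conjTranspose_apply, hM]
    exact (Finset.mul_sum _ _ _).symm
  have hTrL : ptraceLeft ρBC = (Mᴴ * M)ᵀ := by
    rw [hρBC]
    ext c c'
    simp only [ptraceLeft, Matrix.reindex_apply, Matrix.submatrix_apply, Equiv.symm_symm, he,
      Equiv.prodAssoc_apply, Matrix.kroneckerMap_apply, proj, Matrix.vecMulVec_apply,
      Pi.star_apply, Matrix.transpose_apply, Matrix.mul_apply, Matrix.conjTranspose_apply, hM]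
    rw [Fintype.sum_prod_type]
    have hdiag : ∀ l : L, ∑ r : R, ρL l l * (ψ (r, c) * star (ψ (r, c'))) =
        ρL l l * ∑ r : R, ψ (r, c) * star (ψ (r, c')) := by
      intro l; rw [Finset.mul_sum]
    calc ∑ l : L, ∑ r : R, ρL l l * (ψ (r, c) * star (ψ (r, c')))
        = (∑ l : L, ρL l l) * ∑ r : R, ψ (r, c) * star (ψ (r, c')) := by
          rw [Finset.sum_mul]
          exact Finset.sum_congr rfl fun l _ => hdiag l
      _ = ∑ r : R, star (ψ (r, c')) * ψ (r, c) := by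
          rw [show (∑ l : L, ρL l l) = ρL.trace from rfl, hρL.2, one_mul]
          exact Finset.sum_congr rfl fun r _ => mul_comm _ _
  -- Schmidt symmetry
  have hpad : (M * Mᴴ).charpoly * X ^ (Fintype.card C)
      = ((Mᴴ * M)ᵀ).charpoly * X ^ (Fintype.card R) := by
    rw [charpoly_transpose']
    exact charpoly_mul_X_pow M Mᴴ
  have hschmidt : ∑ i, f (hσR.eigenvalues i) = ∑ i, f (hσC.eigenvalues i) :=
    sum_f_eig_of_charpoly_pad hσR hσC hpad f hf0
  -- entropies
  have hTrRH : (ptraceRight ρBC).IsHermitian := hTrR ▸ kron_hermitian hL hσR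
  have hTrLH : (ptraceLeft ρBC).IsHermitian := hTrL ▸ hσC
  have eB : vNEntropy (ptraceRight ρBC)
      = -(∑ i, f (hL.eigenvalues i)) - (∑ i, f (hσR.eigenvalues i)) := by
    rw [vN_eq hTrRH]
    have h1 : (ptraceRight ρBC).charpoly = (ρL ⊗ₖ (M * Mᴴ)).charpoly := by rw [hTrR]
    have h2 : ∑ i, f (hTrRH.eigenvalues i) = ∑ i, f ((kron_hermitian hL hσR).eigenvalues i) :=
      sum_f_eig_of_charpoly_pad hTrRH (kron_hermitian hL hσR) (k := 0) (l := 0)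
        (by simpa using h1) f hf0
    have h3 := sum_f_kron hL hσR (kron_hermitian hL hσR) hLnn hσRnn f hfdef
    rw [show ∑ i, (hTrRH.eigenvalues i * Real.log (hTrRH.eigenvalues i))
        = ∑ i, f (hTrRH.eigenvalues i) from rfl, h2, h3, hσRsum, hLsum]
    ring
  have eC : vNEntropy (ptraceLeft ρBC) = -(∑ i, f (hσR.eigenvalues i)) := by
    rw [vN_eq hTrLH]
    have h2 : ∑ i, f (hTrLH.eigenvalues i) = ∑ i, f (hσC.eigenvalues i) :=
      sum_f_eig_of_charpoly_pad hTrLH hσC (k := 0) (l := 0)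
        (by simp [hTrL]) f hf0
    rw [show ∑ i, (hTrLH.eigenvalues i * Real.log (hTrLH.eigenvalues i))
        = ∑ i, f (hTrLH.eigenvalues i) from rfl, h2, ← hschmidt]
  have eBC : vNEntropy ρBC = -(∑ i, f (hL.eigenvalues i)) := by
    rw [vN_eq hBCH]
    rw [show ∑ i, (hBCH.eigenvalues i * Real.log (hBCH.eigenvalues i))
        = ∑ i, f (hBCH.eigenvalues i) from rfl, hsumBC, hsumK]
  rw [eBC, eB, eC]
  ring
end
end

section
/- If ρ_{ABC} = ⨁_j λ_j ρ_{A b_j^L} ⊗ ρ_{b_j^R C} with respect to a direct sum decomposition H_B = ⨁_j H_{b_j^L} ⊗ H_{b_j^R}, where {λ_j} is a probability distribution and ρ_{A b_j^L}, ρ_{b_j^R C} are density matrices, then ρ_{ABC} saturates strong subadditivity: S(ρ_{AB}) + S(ρ_{BC}) = S(ρ_{ABC}) + S(ρ_B). (Sufficiency direction of the SSA saturation condition.) -/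
open Matrix Kronecker BigOperators
open scoped ComplexOrder

noncomputable section

namespace SSAaux

open Polynomial

noncomputable def phi (x : ℝ) : ℝ := x * Real.log x

lemma phi_mul {x y : ℝ} (hx : 0 ≤ x) (hy : 0 ≤ y) :
    phi (x * y) = x * phi y + y * phi x := by
  rcases hx.eq_or_lt with h | h
  · simp [phi, ← h]
  rcases hy.eq_or_lt with h' | h'
  · simp [phi, ← h']
  · unfold phi; rw [Real.log_mul h.ne' h'.ne']; ring

lemma scalarX_eq {n : Type*} [Fintype n] [DecidableEq n] :
    (Matrix.scalar n (X : ℂ[X])) = (X : ℂ[X]) • (1 : Matrix n n ℂ[X]) := by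
  ext i j
  by_cases h : i = j <;> simp [Matrix.scalar_apply, Matrix.one_apply, h]

lemma charpoly_unit_conj {n : Type*} [Fintype n] [DecidableEq n]
    (U A V : Matrix n n ℂ) (hUV : U * V = 1) :
    (U * A * V).charpoly = A.charpoly := by
  have h1 : (U.map (C : ℂ →+* ℂ[X])) * (V.map (C : ℂ →+* ℂ[X])) = 1 := by
    rw [← Matrix.map_mul, hUV, Matrix.map_one] <;> simp
  have hC : Matrix.charmatrix (U * A * V) =
      U.map (C : ℂ →+* ℂ[X]) * Matrix.charmatrix A * V.map (C : ℂ →+* ℂ[X]) := by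
    rw [Matrix.charmatrix, Matrix.charmatrix, RingHom.mapMatrix_apply, RingHom.mapMatrix_apply,
      Matrix.map_mul, Matrix.map_mul, mul_sub, sub_mul]
    congr 1
    rw [scalarX_eq, mul_smul_comm, smul_mul_assoc, mul_one, h1]
  rw [Matrix.charpoly, Matrix.charpoly, hC, Matrix.det_mul, Matrix.det_mul]
  have h2 : (U.map (C : ℂ →+* ℂ[X])).det * (V.map (C : ℂ →+* ℂ[X])).det = 1 := by
    rw [← Matrix.det_mul, h1, Matrix.det_one]
  calc (U.map (C : ℂ →+* ℂ[X])).det * (Matrix.charmatrix A).det * (V.map (C : ℂ →+* ℂ[X])).det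
      = (Matrix.charmatrix A).det *
        ((U.map (C : ℂ →+* ℂ[X])).det * (V.map (C : ℂ →+* ℂ[X])).det) := by ring
    _ = (Matrix.charmatrix A).det := by rw [h2, mul_one]

lemma roots_charpoly_diagonal {n : Type*} [Fintype n] [DecidableEq n] (v : n → ℂ) :
    (Matrix.diagonal v).charpoly.roots = Finset.univ.val.map v := by
  have h : Matrix.charmatrix (Matrix.diagonal v) =
      Matrix.diagonal (fun i => (X : ℂ[X]) - C (v i)) := by
    refine Matrix.ext fun i j => ?_
    by_cases h : i = j
    · subst h; simp [Matrix.charmatrix_apply_eq]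
    · rw [Matrix.charmatrix_apply_ne _ _ _ h, Matrix.diagonal_apply_ne _ h,
        Matrix.diagonal_apply_ne _ h]
      simp
  rw [Matrix.charpoly, h, Matrix.det_diagonal]
  have h2 : ∏ i, ((X : ℂ[X]) - C (v i)) =
      (Multiset.map (fun a => (X : ℂ[X]) - C a) (Finset.univ.val.map v)).prod := by
    rw [Multiset.map_map]; rfl
  rw [h2, roots_multiset_prod_X_sub_C]

lemma isHermitian_unitary_diag {n : Type*} [Fintype n] [DecidableEq n]
    (U : Matrix n n ℂ) (d : n → ℝ) :
    (U * Matrix.diagonal (fun i => (d i : ℂ)) * Uᴴ).IsHermitian := by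
  apply Matrix.isHermitian_mul_mul_conjTranspose
  rw [Matrix.IsHermitian, Matrix.diagonal_conjTranspose]
  have h : (star fun i => ((d i : ℝ) : ℂ)) = fun i => ((d i : ℝ) : ℂ) := by
    funext i; simp [Complex.conj_ofReal]
  rw [h]

lemma sum_f_eigenvalues {n : Type*} [Fintype n] [DecidableEq n]
    {M U : Matrix n n ℂ} {d : n → ℝ}
    (hU1 : U * Uᴴ = 1) (hU2 : Uᴴ * U = 1)
    (hM : M = U * Matrix.diagonal (fun i => (d i : ℂ)) * Uᴴ)
    (hH : M.IsHermitian) (f : ℝ → ℝ) :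
    ∑ i, f (hH.eigenvalues i) = ∑ i, f (d i) := by
  set V : Matrix n n ℂ := (hH.eigenvectorUnitary : Matrix n n ℂ) with hV
  have hV1 : V * Vᴴ = 1 := by
    rw [← Matrix.star_eq_conjTranspose]
    exact Matrix.mem_unitaryGroup_iff.mp hH.eigenvectorUnitary.2
  have hV2 : Vᴴ * V = 1 := by
    rw [← Matrix.star_eq_conjTranspose]
    exact Matrix.mem_unitaryGroup_iff'.mp hH.eigenvectorUnitary.2
  have hspec : M = V * Matrix.diagonal (fun i => ((hH.eigenvalues i : ℝ) : ℂ)) * Vᴴ := by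
    simpa [Matrix.star_eq_conjTranspose, Function.comp_def] using hH.spectral_theorem
  have h1 : Vᴴ * M * V = Matrix.diagonal (fun i => ((hH.eigenvalues i : ℝ) : ℂ)) := by
    conv_lhs => rw [hspec]
    calc Vᴴ * (V * Matrix.diagonal (fun i => ((hH.eigenvalues i : ℝ) : ℂ)) * Vᴴ) * V
        = (Vᴴ * V) * Matrix.diagonal (fun i => ((hH.eigenvalues i : ℝ) : ℂ)) * (Vᴴ * V) := by
          simp only [Matrix.mul_assoc]
      _ = _ := by rw [hV2, Matrix.one_mul, Matrix.mul_one]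
  have h2 : Vᴴ * M * V =
      (Vᴴ * U) * Matrix.diagonal (fun i => (d i : ℂ)) * (Uᴴ * V) := by
    rw [hM]; simp only [Matrix.mul_assoc]
  have hcp : (Matrix.diagonal (fun i => ((hH.eigenvalues i : ℝ) : ℂ))).charpoly
      = (Matrix.diagonal (fun i => (d i : ℂ))).charpoly := by
    rw [← h1, h2]
    refine charpoly_unit_conj _ _ _ ?_
    calc (Vᴴ * U) * (Uᴴ * V) = Vᴴ * (U * Uᴴ) * V := by simp only [Matrix.mul_assoc]
      _ = 1 := by rw [hU1, Matrix.mul_one, hV2]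
  have hroots := congrArg Polynomial.roots hcp
  rw [roots_charpoly_diagonal, roots_charpoly_diagonal] at hroots
  have hmm : Finset.univ.val.map hH.eigenvalues = Finset.univ.val.map d := by
    apply Multiset.map_injective Complex.ofReal_injective
    simpa [Multiset.map_map, Function.comp] using hroots
  calc ∑ i, f (hH.eigenvalues i)
      = (Multiset.map f (Finset.univ.val.map hH.eigenvalues)).sum := by
        rw [Multiset.map_map]; rfl
    _ = (Multiset.map f (Finset.univ.val.map d)).sum := by rw [hmm]
    _ = ∑ i, f (d i) := by rw [Multiset.map_map]; rfl

lemma vNEntropy_diag {n : Type*} [Fintype n] [DecidableEq n]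
    {M U : Matrix n n ℂ} {d : n → ℝ}
    (hU1 : U * Uᴴ = 1) (hU2 : Uᴴ * U = 1)
    (hM : M = U * Matrix.diagonal (fun i => (d i : ℂ)) * Uᴴ) :
    vNEntropy M = -∑ i, phi (d i) := by
  have hH : M.IsHermitian := hM ▸ isHermitian_unitary_diag U d
  rw [vNEntropy, dif_pos hH]
  have h := sum_f_eigenvalues hU1 hU2 hM hH phi
  simp only [phi] at h
  rw [h]
  rfl

lemma kron_conjTranspose {l m : Type*} (A : Matrix l l ℂ) (B : Matrix m m ℂ) :
    (A ⊗ₖ B)ᴴ = Aᴴ ⊗ₖ Bᴴ := by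
  ext i j
  cases i; cases j
  simp [Matrix.conjTranspose_apply, Matrix.kroneckerMap_apply, mul_comm]

lemma sum_eigenvalues_eq_one {n : Type*} [Fintype n] [DecidableEq n]
    {M : Matrix n n ℂ} (h : IsDensity M) :
    ∑ i, h.1.1.eigenvalues i = 1 := by
  have hspec := h.1.1.spectral_theorem
  have ht : M.trace = ∑ i, ((h.1.1.eigenvalues i : ℝ) : ℂ) := by
    conv_lhs => rw [hspec]
    rw [Unitary.conjStarAlgAut_apply]
    rw [Matrix.trace_mul_cycle]
    rw [show (star (h.1.1.eigenvectorUnitary : Matrix n n ℂ)) *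
        (h.1.1.eigenvectorUnitary : Matrix n n ℂ) = 1 from
      Matrix.mem_unitaryGroup_iff'.mp h.1.1.eigenvectorUnitary.2]
    rw [Matrix.one_mul, Matrix.trace_diagonal]
    rfl
  have h1 : ((∑ i, h.1.1.eigenvalues i : ℝ) : ℂ) = 1 := by
    push_cast
    rw [← ht, h.2]
  exact_mod_cast h1

lemma sum_phi_prod {P Q : Type*} [Fintype P] [Fintype Q] {l : ℝ} (hl : 0 ≤ l)
    {u : P → ℝ} {v : Q → ℝ} (hu : ∀ p, 0 ≤ u p) (hv : ∀ q, 0 ≤ v q)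
    (hu1 : ∑ p, u p = 1) (hv1 : ∑ q, v q = 1) :
    ∑ s : P × Q, phi (l * u s.1 * v s.2) =
      phi l + l * ((∑ p, phi (u p)) + (∑ q, phi (v q))) := by
  rw [Fintype.sum_prod_type]
  have h1 : ∀ p q, phi (l * u p * v q) =
      l * (u p * phi (v q)) + l * (phi (u p) * v q) + phi l * (u p * v q) := by
    intro p q
    rw [mul_assoc, phi_mul hl (mul_nonneg (hu p) (hv q)), phi_mul (hu p) (hv q)]
    ring
  calc ∑ p, ∑ q, phi (l * u p * v q)
      = ∑ p, ∑ q, (l * (u p * phi (v q)) + l * (phi (u p) * v q) + phi l * (u p * v q)) :=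
        Finset.sum_congr rfl fun p _ => Finset.sum_congr rfl fun q _ => h1 p q
    _ = l * ((∑ p, u p) * (∑ q, phi (v q))) + l * ((∑ p, phi (u p)) * (∑ q, v q))
          + phi l * ((∑ p, u p) * (∑ q, v q)) := by
        simp only [Finset.sum_add_distrib, ← Finset.mul_sum]
        simp only [Finset.sum_mul]
    _ = phi l + l * ((∑ p, phi (u p)) + (∑ q, phi (v q))) := by
        rw [hu1, hv1]; ring

lemma ptraceRight_isDensity {m k : Type*} [Fintype m] [Fintype k]
    {ρ : Matrix (m × k) (m × k) ℂ} (h : IsDensity ρ) : IsDensity (ptraceRight ρ) := by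
  classical
  obtain ⟨⟨hherm, hpsd⟩, htr⟩ := And.intro (Matrix.posSemidef_iff_dotProduct_mulVec.mp h.1) h.2
  refine ⟨Matrix.posSemidef_iff_dotProduct_mulVec.mpr ⟨?_, ?_⟩, ?_⟩
  · refine Matrix.ext fun i j => ?_
    show star ((ptraceRight ρ) j i) = (ptraceRight ρ) i j
    unfold ptraceRight
    rw [star_sum]
    refine Finset.sum_congr rfl fun t _ => ?_
    calc star (ρ (j, t) (i, t)) = ρᴴ (i, t) (j, t) := rfl
      _ = ρ (i, t) (j, t) := by rw [hherm]
  · intro x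
    have key : dotProduct (star x) (ptraceRight ρ *ᵥ x)
        = ∑ t : k, dotProduct (star (fun p : m × k => if p.2 = t then x p.1 else 0))
            (ρ *ᵥ (fun p : m × k => if p.2 = t then x p.1 else 0)) := by
      simp only [dotProduct, Matrix.mulVec, ptraceRight, Pi.star_apply,
        Fintype.sum_prod_type, apply_ite (star : ℂ → ℂ), star_zero, mul_ite, ite_mul,
        zero_mul, mul_zero, Finset.sum_ite_eq', Finset.mem_univ, if_true]
      rw [Finset.sum_comm]
      refine Finset.sum_congr rfl fun i _ => ?_
      simp only [Finset.mul_sum, Finset.sum_mul, mul_assoc]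
      exact Finset.sum_comm
    rw [key]
    exact Finset.sum_nonneg fun t _ => hpsd _
  · rw [← htr]
    simp only [Matrix.trace, ptraceRight, Matrix.diag, Fintype.sum_prod_type]

lemma ptraceLeft_isDensity {m k : Type*} [Fintype m] [Fintype k]
    {ρ : Matrix (m × k) (m × k) ℂ} (h : IsDensity ρ) : IsDensity (ptraceLeft ρ) := by
  classical
  obtain ⟨⟨hherm, hpsd⟩, htr⟩ := And.intro (Matrix.posSemidef_iff_dotProduct_mulVec.mp h.1) h.2
  refine ⟨Matrix.posSemidef_iff_dotProduct_mulVec.mpr ⟨?_, ?_⟩, ?_⟩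
  · refine Matrix.ext fun i j => ?_
    show star ((ptraceLeft ρ) j i) = (ptraceLeft ρ) i j
    unfold ptraceLeft
    rw [star_sum]
    refine Finset.sum_congr rfl fun t _ => ?_
    calc star (ρ (t, j) (t, i)) = ρᴴ (t, i) (t, j) := rfl
      _ = ρ (t, i) (t, j) := by rw [hherm]
  · intro x
    have key : dotProduct (star x) (ptraceLeft ρ *ᵥ x)
        = ∑ t : m, dotProduct (star (fun p : m × k => if p.1 = t then x p.2 else 0))
            (ρ *ᵥ (fun p : m × k => if p.1 = t then x p.2 else 0)) := by
      simp only [dotProduct, Matrix.mulVec, ptraceLeft, Pi.star_apply,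
        Fintype.sum_prod_type_right, apply_ite (star : ℂ → ℂ), star_zero, mul_ite, ite_mul,
        zero_mul, mul_zero, Finset.sum_ite_eq', Finset.mem_univ, if_true]
      rw [Finset.sum_comm]
      refine Finset.sum_congr rfl fun i _ => ?_
      simp only [Finset.mul_sum, Finset.sum_mul, mul_assoc]
      exact Finset.sum_comm
    rw [key]
    exact Finset.sum_nonneg fun t _ => hpsd _
  · rw [← htr]
    simp only [Matrix.trace, ptraceLeft, Matrix.diag, Fintype.sum_prod_type_right]

lemma block_entropy {K : ℕ} {E F : Fin K → Type*}
    [∀ j, Fintype (E j)] [∀ j, DecidableEq (E j)]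
    [∀ j, Fintype (F j)] [∀ j, DecidableEq (F j)]
    (lam : Fin K → ℝ) (hpos : ∀ j, 0 ≤ lam j)
    (A : ∀ j, Matrix (E j) (E j) ℂ) (B : ∀ j, Matrix (F j) (F j) ℂ)
    (hA : ∀ j, IsDensity (A j)) (hB : ∀ j, IsDensity (B j))
    {n : Type*} [Fintype n] [DecidableEq n] (g : n ≃ (Σ j : Fin K, E j × F j))
    (M : Matrix n n ℂ)
    (hM : M = (Matrix.blockDiagonal' (fun j => (lam j : ℂ) • (A j ⊗ₖ B j))).submatrix g g) :
    vNEntropy M = -∑ j, (phi (lam j) +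
      lam j * ((∑ p, phi ((hA j).1.1.eigenvalues p)) +
               (∑ q, phi ((hB j).1.1.eigenvalues q)))) := by
  classical
  set α : ∀ j, E j → ℝ := fun j => (hA j).1.1.eigenvalues with hα
  set β : ∀ j, F j → ℝ := fun j => (hB j).1.1.eigenvalues with hβ
  set U : ∀ j, Matrix (E j) (E j) ℂ :=
    fun j => ((hA j).1.1.eigenvectorUnitary : Matrix (E j) (E j) ℂ) with hU
  set V : ∀ j, Matrix (F j) (F j) ℂ :=
    fun j => ((hB j).1.1.eigenvectorUnitary : Matrix (F j) (F j) ℂ) with hV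
  have hUU : ∀ j, U j * (U j)ᴴ = 1 := fun j => by
    rw [hU, ← Matrix.star_eq_conjTranspose]
    exact Matrix.mem_unitaryGroup_iff.mp ((hA j).1.1.eigenvectorUnitary).2
  have hU'U : ∀ j, (U j)ᴴ * U j = 1 := fun j => by
    rw [hU, ← Matrix.star_eq_conjTranspose]
    exact Matrix.mem_unitaryGroup_iff'.mp ((hA j).1.1.eigenvectorUnitary).2
  have hVV : ∀ j, V j * (V j)ᴴ = 1 := fun j => by
    rw [hV, ← Matrix.star_eq_conjTranspose]
    exact Matrix.mem_unitaryGroup_iff.mp ((hB j).1.1.eigenvectorUnitary).2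
  have hV'V : ∀ j, (V j)ᴴ * V j = 1 := fun j => by
    rw [hV, ← Matrix.star_eq_conjTranspose]
    exact Matrix.mem_unitaryGroup_iff'.mp ((hB j).1.1.eigenvectorUnitary).2
  have hAspec : ∀ j, A j = U j * Matrix.diagonal (fun p => ((α j p : ℝ) : ℂ)) * (U j)ᴴ :=
    fun j => by
      simpa [Matrix.star_eq_conjTranspose, Function.comp_def] using (hA j).1.1.spectral_theorem
  have hBspec : ∀ j, B j = V j * Matrix.diagonal (fun q => ((β j q : ℝ) : ℂ)) * (V j)ᴴ :=
    fun j => by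
      simpa [Matrix.star_eq_conjTranspose, Function.comp_def] using (hB j).1.1.spectral_theorem
  have hblk : ∀ j, (lam j : ℂ) • (A j ⊗ₖ B j) =
      (U j ⊗ₖ V j) *
        Matrix.diagonal (fun s : E j × F j => ((lam j * α j s.1 * β j s.2 : ℝ) : ℂ)) *
        (U j ⊗ₖ V j)ᴴ := by
    intro j
    have hD : Matrix.diagonal (fun s : E j × F j => ((lam j * α j s.1 * β j s.2 : ℝ) : ℂ)) =
        (lam j : ℂ) • Matrix.diagonal
          (fun s : E j × F j => ((α j s.1 : ℝ) : ℂ) * ((β j s.2 : ℝ) : ℂ)) := by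
      refine Matrix.ext fun s t => ?_
      by_cases h : s = t
      · subst h
        simp only [Matrix.diagonal_apply_eq, Matrix.smul_apply, smul_eq_mul]
        push_cast
        ring
      · simp [Matrix.diagonal_apply_ne _ h, h]
    calc (lam j : ℂ) • (A j ⊗ₖ B j)
        = (lam j : ℂ) • ((U j * Matrix.diagonal (fun p => ((α j p : ℝ) : ℂ)) * (U j)ᴴ) ⊗ₖ
            (V j * Matrix.diagonal (fun q => ((β j q : ℝ) : ℂ)) * (V j)ᴴ)) := by
          rw [← hAspec j, ← hBspec j]
      _ = (lam j : ℂ) • ((U j ⊗ₖ V j) *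
            (Matrix.diagonal (fun p => ((α j p : ℝ) : ℂ)) ⊗ₖ
              Matrix.diagonal (fun q => ((β j q : ℝ) : ℂ))) * ((U j)ᴴ ⊗ₖ (V j)ᴴ)) := by
          rw [Matrix.mul_kronecker_mul, Matrix.mul_kronecker_mul]
      _ = (U j ⊗ₖ V j) *
            Matrix.diagonal (fun s : E j × F j => ((lam j * α j s.1 * β j s.2 : ℝ) : ℂ)) *
            (U j ⊗ₖ V j)ᴴ := by
          rw [Matrix.diagonal_kronecker_diagonal, kron_conjTranspose, hD,
            mul_smul_comm, smul_mul_assoc]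
  set W : Matrix (Σ j : Fin K, E j × F j) (Σ j : Fin K, E j × F j) ℂ :=
    Matrix.blockDiagonal' (fun j => U j ⊗ₖ V j) with hW
  set dR : (Σ j : Fin K, E j × F j) → ℝ :=
    fun s => lam s.1 * α s.1 s.2.1 * β s.1 s.2.2 with hdR
  have hbd : Matrix.blockDiagonal' (fun j => (lam j : ℂ) • (A j ⊗ₖ B j)) =
      W * Matrix.diagonal (fun s => ((dR s : ℝ) : ℂ)) * Wᴴ := by
    have h1 : (fun j => (lam j : ℂ) • (A j ⊗ₖ B j)) = fun j =>
        (U j ⊗ₖ V j) *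
          Matrix.diagonal (fun s : E j × F j => ((lam j * α j s.1 * β j s.2 : ℝ) : ℂ)) *
          (U j ⊗ₖ V j)ᴴ := funext hblk
    rw [h1, Matrix.blockDiagonal'_mul, Matrix.blockDiagonal'_mul, hW,
      Matrix.blockDiagonal'_conjTranspose, Matrix.blockDiagonal'_diagonal]
  have hWW : W * Wᴴ = 1 := by
    rw [hW, Matrix.blockDiagonal'_conjTranspose, ← Matrix.blockDiagonal'_mul]
    have h2 : (fun j => (U j ⊗ₖ V j) * (U j ⊗ₖ V j)ᴴ) =
        fun j => (1 : Matrix (E j × F j) (E j × F j) ℂ) := by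
      funext j
      rw [kron_conjTranspose, ← Matrix.mul_kronecker_mul, hUU j, hVV j,
        Matrix.one_kronecker_one]
    rw [h2]
    exact Matrix.blockDiagonal'_one
  have hW'W : Wᴴ * W = 1 := by
    rw [hW, Matrix.blockDiagonal'_conjTranspose, ← Matrix.blockDiagonal'_mul]
    have h2 : (fun j => (U j ⊗ₖ V j)ᴴ * (U j ⊗ₖ V j)) =
        fun j => (1 : Matrix (E j × F j) (E j × F j) ℂ) := by
      funext j
      rw [kron_conjTranspose, ← Matrix.mul_kronecker_mul, hU'U j, hV'V j,
        Matrix.one_kronecker_one]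
    rw [h2]
    exact Matrix.blockDiagonal'_one
  set U' : Matrix n n ℂ := W.submatrix g g with hU'
  have hM' : M = U' * Matrix.diagonal (fun i => ((dR (g i) : ℝ) : ℂ)) * U'ᴴ := by
    rw [hM, hbd]
    rw [← Matrix.submatrix_mul_equiv (W * Matrix.diagonal fun s => ((dR s : ℝ) : ℂ)) Wᴴ g g g,
      ← Matrix.submatrix_mul_equiv W (Matrix.diagonal fun s => ((dR s : ℝ) : ℂ)) g g g,
      Matrix.submatrix_diagonal_equiv, hU']
    rfl
  have hU'1 : U' * U'ᴴ = 1 := by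
    rw [hU', Matrix.conjTranspose_submatrix, Matrix.submatrix_mul_equiv, hWW,
      Matrix.submatrix_one_equiv]
  have hU'2 : U'ᴴ * U' = 1 := by
    rw [hU', Matrix.conjTranspose_submatrix, Matrix.submatrix_mul_equiv, hW'W,
      Matrix.submatrix_one_equiv]
  rw [vNEntropy_diag hU'1 hU'2 hM']
  have hsum : ∑ i : n, phi (dR (g i)) = ∑ s, phi (dR s) :=
    Equiv.sum_comp g (fun s => phi (dR s))
  rw [hsum, ← Finset.univ_sigma_univ, Finset.sum_sigma]
  congr 1
  refine Finset.sum_congr rfl fun j _ => ?_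
  have := sum_phi_prod (hpos j) (fun p => (hA j).1.eigenvalues_nonneg p)
    (fun q => (hB j).1.eigenvalues_nonneg q)
    (sum_eigenvalues_eq_one (hA j)) (sum_eigenvalues_eq_one (hB j))
  simpa using this

def eqv1 {K : ℕ} (a c : Type*) (L R : Fin K → ℕ) :
    (a × (Σ j : Fin K, Fin (L j) × Fin (R j)) × c) ≃
      (Σ j : Fin K, (a × Fin (L j)) × (Fin (R j) × c)) where
  toFun x := ⟨x.2.1.1, ((x.1, x.2.1.2.1), (x.2.1.2.2, x.2.2))⟩
  invFun s := (s.2.1.1, ⟨s.1, (s.2.1.2, s.2.2.1)⟩, s.2.2.2)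
  left_inv _ := rfl
  right_inv _ := rfl

def eqv2 {K : ℕ} (a : Type*) (L R : Fin K → ℕ) :
    (a × (Σ j : Fin K, Fin (L j) × Fin (R j))) ≃
      (Σ j : Fin K, (a × Fin (L j)) × Fin (R j)) where
  toFun x := ⟨x.2.1, ((x.1, x.2.2.1), x.2.2.2)⟩
  invFun s := (s.2.1.1, ⟨s.1, (s.2.1.2, s.2.2)⟩)
  left_inv _ := rfl
  right_inv _ := rfl

def eqv3 {K : ℕ} (c : Type*) (L R : Fin K → ℕ) :
    ((Σ j : Fin K, Fin (L j) × Fin (R j)) × c) ≃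
      (Σ j : Fin K, Fin (L j) × (Fin (R j) × c)) where
  toFun x := ⟨x.1.1, (x.1.2.1, (x.1.2.2, x.2))⟩
  invFun s := (⟨s.1, (s.2.1, s.2.2.1)⟩, s.2.2.2)
  left_inv _ := rfl
  right_inv _ := rfl

end SSAaux

/-- sufficiency direction of the strong subadditivity saturation condition:
a block-diagonal state `⨁_j λ_j ρ_{A L_j} ⊗ ρ_{R_j C}` saturates SSA. -/
theorem ssa_saturation_of_blockform {a c : Type*} [Fintype a] [Fintype c]
    [DecidableEq a] [DecidableEq c]
    {K : ℕ} (L R : Fin K → ℕ)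
    (lam : Fin K → ℝ) (hpos : ∀ j, 0 ≤ lam j) (hsum : ∑ j, lam j = 1)
    (ρAL : ∀ j, Matrix (a × Fin (L j)) (a × Fin (L j)) ℂ)
    (ρRC : ∀ j, Matrix (Fin (R j) × c) (Fin (R j) × c) ℂ)
    (hAL : ∀ j, IsDensity (ρAL j)) (hRC : ∀ j, IsDensity (ρRC j))
    (ρABC : Matrix (a × (Σ j : Fin K, Fin (L j) × Fin (R j)) × c)
            (a × (Σ j : Fin K, Fin (L j) × Fin (R j)) × c) ℂ)
    (hblock : ∀ (x y : a) (c1 c2 : c) (j j' : Fin K) (l : Fin (L j)) (r : Fin (R j))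
        (l' : Fin (L j')) (r' : Fin (R j')),
        ρABC (x, ⟨j, (l, r)⟩, c1) (y, ⟨j', (l', r')⟩, c2) =
          if h : j = j' then
            (lam j : ℂ) * ρAL j (x, l) (y, Fin.cast (congrArg L h.symm) l') *
              ρRC j (r, c1) (Fin.cast (congrArg R h.symm) r', c2)
          else 0) :
    vNEntropy (trC ρABC) + vNEntropy (ptraceLeft ρABC) =
      vNEntropy ρABC + vNEntropy (trAC ρABC) := by
  classical
  have hσ : ∀ j, IsDensity (ptraceRight (ρRC j)) :=
    fun j => SSAaux.ptraceRight_isDensity (hRC j)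
  have hτ : ∀ j, IsDensity (ptraceLeft (ρAL j)) :=
    fun j => SSAaux.ptraceLeft_isDensity (hAL j)
  -- block forms of the four matrices
  have hM1 : ρABC = (Matrix.blockDiagonal'
      (fun j => (lam j : ℂ) • (ρAL j ⊗ₖ ρRC j))).submatrix (SSAaux.eqv1 a c L R)
        (SSAaux.eqv1 a c L R) := by
    refine Matrix.ext fun i i' => ?_
    obtain ⟨x, ⟨j, l, r⟩, z⟩ := i
    obtain ⟨y, ⟨j', l', r'⟩, z'⟩ := i'
    rw [hblock x y z z' j j' l r l' r']
    show _ = Matrix.blockDiagonal' (fun j => (lam j : ℂ) • (ρAL j ⊗ₖ ρRC j))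
      ⟨j, ((x, l), (r, z))⟩ ⟨j', ((y, l'), (r', z'))⟩
    by_cases h : j = j'
    · subst h
      rw [dif_pos rfl, Matrix.blockDiagonal'_apply_eq]
      show (lam j : ℂ) * ρAL j (x, l) (y, l') * ρRC j (r, z) (r', z') =
        (lam j : ℂ) * (ρAL j (x, l) (y, l') * ρRC j (r, z) (r', z'))
      ring
    · rw [dif_neg h, Matrix.blockDiagonal'_apply_ne _ _ _ h]
  have hM2 : trC ρABC = (Matrix.blockDiagonal'
      (fun j => (lam j : ℂ) • (ρAL j ⊗ₖ ptraceRight (ρRC j)))).submatrix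
        (SSAaux.eqv2 a L R) (SSAaux.eqv2 a L R) := by
    refine Matrix.ext fun i i' => ?_
    obtain ⟨x, ⟨j, l, r⟩⟩ := i
    obtain ⟨y, ⟨j', l', r'⟩⟩ := i'
    show (∑ z : c, ρABC (x, ⟨j, (l, r)⟩, z) (y, ⟨j', (l', r')⟩, z)) =
      Matrix.blockDiagonal' (fun j => (lam j : ℂ) • (ρAL j ⊗ₖ ptraceRight (ρRC j)))
        ⟨j, ((x, l), r)⟩ ⟨j', ((y, l'), r')⟩
    by_cases h : j = j'
    · subst h
      rw [Matrix.blockDiagonal'_apply_eq]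
      rw [Finset.sum_congr rfl fun z _ => hblock x y z z j j l r l' r']
      simp only [dif_pos]
      show (∑ z : c, (lam j : ℂ) * ρAL j (x, l) (y, l') * ρRC j (r, z) (r', z)) =
        (lam j : ℂ) * (ρAL j (x, l) (y, l') * ∑ z : c, ρRC j (r, z) (r', z))
      rw [← Finset.mul_sum, mul_assoc]
    · rw [Matrix.blockDiagonal'_apply_ne _ _ _ h]
      rw [Finset.sum_congr rfl fun z _ => hblock x y z z j j' l r l' r']
      simp [h]
  have hM3 : ptraceLeft ρABC = (Matrix.blockDiagonal'
      (fun j => (lam j : ℂ) • (ptraceLeft (ρAL j) ⊗ₖ ρRC j))).submatrix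
        (SSAaux.eqv3 c L R) (SSAaux.eqv3 c L R) := by
    refine Matrix.ext fun i i' => ?_
    obtain ⟨⟨j, l, r⟩, z⟩ := i
    obtain ⟨⟨j', l', r'⟩, z'⟩ := i'
    show (∑ x : a, ρABC (x, ⟨j, (l, r)⟩, z) (x, ⟨j', (l', r')⟩, z')) =
      Matrix.blockDiagonal' (fun j => (lam j : ℂ) • (ptraceLeft (ρAL j) ⊗ₖ ρRC j))
        ⟨j, (l, (r, z))⟩ ⟨j', (l', (r', z'))⟩
    by_cases h : j = j'
    · subst h
      rw [Matrix.blockDiagonal'_apply_eq]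
      rw [Finset.sum_congr rfl fun x _ => hblock x x z z' j j l r l' r']
      simp only [dif_pos]
      show (∑ x : a, (lam j : ℂ) * ρAL j (x, l) (x, l') * ρRC j (r, z) (r', z')) =
        (lam j : ℂ) * ((∑ x : a, ρAL j (x, l) (x, l')) * ρRC j (r, z) (r', z'))
      rw [Finset.sum_mul, Finset.mul_sum]
      exact Finset.sum_congr rfl fun x _ => by ring
    · rw [Matrix.blockDiagonal'_apply_ne _ _ _ h]
      rw [Finset.sum_congr rfl fun x _ => hblock x x z z' j j' l r l' r']
      simp [h]
  have hM4 : trAC ρABC = (Matrix.blockDiagonal'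
      (fun j => (lam j : ℂ) • (ptraceLeft (ρAL j) ⊗ₖ ptraceRight (ρRC j)))).submatrix
        (Equiv.refl _) (Equiv.refl _) := by
    refine Matrix.ext fun i i' => ?_
    obtain ⟨j, l, r⟩ := i
    obtain ⟨j', l', r'⟩ := i'
    show (∑ x : a, ∑ z : c, ρABC (x, ⟨j, (l, r)⟩, z) (x, ⟨j', (l', r')⟩, z)) =
      Matrix.blockDiagonal' (fun j => (lam j : ℂ) •
        (ptraceLeft (ρAL j) ⊗ₖ ptraceRight (ρRC j))) ⟨j, (l, r)⟩ ⟨j', (l', r')⟩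
    by_cases h : j = j'
    · subst h
      rw [Matrix.blockDiagonal'_apply_eq]
      rw [Finset.sum_congr rfl fun x _ =>
        Finset.sum_congr rfl fun z _ => hblock x x z z j j l r l' r']
      simp only [dif_pos]
      show (∑ x : a, ∑ z : c, (lam j : ℂ) * ρAL j (x, l) (x, l') * ρRC j (r, z) (r', z)) =
        (lam j : ℂ) * ((∑ x : a, ρAL j (x, l) (x, l')) * ∑ z : c, ρRC j (r, z) (r', z))
      rw [Finset.sum_mul, Finset.mul_sum]
      refine Finset.sum_congr rfl fun x _ => ?_
      rw [← Finset.mul_sum, mul_assoc]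
    · rw [Matrix.blockDiagonal'_apply_ne _ _ _ h]
      rw [Finset.sum_congr rfl fun x _ =>
        Finset.sum_congr rfl fun z _ => hblock x x z z j j' l r l' r']
      simp [h]
  have E1 := SSAaux.block_entropy lam hpos ρAL ρRC hAL hRC (SSAaux.eqv1 a c L R) ρABC hM1
  have E2 := SSAaux.block_entropy lam hpos ρAL (fun j => ptraceRight (ρRC j)) hAL hσ
    (SSAaux.eqv2 a L R) (trC ρABC) hM2
  have E3 := SSAaux.block_entropy lam hpos (fun j => ptraceLeft (ρAL j)) ρRC hτ hRC
    (SSAaux.eqv3 c L R) (ptraceLeft ρABC) hM3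
  have E4 := SSAaux.block_entropy lam hpos (fun j => ptraceLeft (ρAL j))
    (fun j => ptraceRight (ρRC j)) hτ hσ (Equiv.refl _) (trAC ρABC) hM4
  rw [E1, E2, E3, E4]
  rw [← neg_add, ← neg_add, ← Finset.sum_add_distrib, ← Finset.sum_add_distrib]
  congr 1
  refine Finset.sum_congr rfl fun j _ => ?_
  ring
end
end

section
/- With the Stinespring setup as above, I_c(ρ,Φ) = S(ρ) holds if and only if S(Ω_B) − S(Ω_C) = S(Ω_{BC}), i.e., the Araki–Lieb inequality is saturated for the BC marginal of the dilated pure state Ω_{ABC}. -/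
open Matrix Kronecker BigOperators
open scoped ComplexOrder

noncomputable section

open Polynomial in
private lemma det_smul_one_sub_eq_prod {n : Type*} [Fintype n] [DecidableEq n]
    {A : Matrix n n ℂ} (hA : A.IsHermitian) (x : ℂ) :
    (x • (1 : Matrix n n ℂ) - A).det = ∏ i, (x - (hA.eigenvalues i : ℂ)) := by
  set V : Matrix n n ℂ := (hA.eigenvectorUnitary : Matrix n n ℂ) with hV
  have hVV : V * Vᴴ = 1 := by
    simpa [hV, star_eq_conjTranspose] using
      (Matrix.mem_unitaryGroup_iff.mp hA.eigenvectorUnitary.2)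
  have key : x • (1 : Matrix n n ℂ) - A
      = V * (x • (1 : Matrix n n ℂ) - diagonal (RCLike.ofReal ∘ hA.eigenvalues)) * Vᴴ := by
    rw [Matrix.mul_sub, Matrix.sub_mul]
    rw [mul_smul_comm, Matrix.mul_one, smul_mul_assoc, hVV]
    congr 1
    simpa [hV, star_eq_conjTranspose] using hA.spectral_theorem
  have h1 : V.det * Vᴴ.det = 1 := by rw [← det_mul, hVV, det_one]
  rw [key, det_mul, det_mul]
  calc V.det * (x • (1:Matrix n n ℂ) - diagonal (RCLike.ofReal ∘ hA.eigenvalues)).det * Vᴴ.det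
      = (V.det * Vᴴ.det) * (x • (1:Matrix n n ℂ) - diagonal (RCLike.ofReal ∘ hA.eigenvalues)).det := by
        ring
    _ = (x • (1:Matrix n n ℂ) - diagonal (RCLike.ofReal ∘ hA.eigenvalues)).det := by
        rw [h1, one_mul]
    _ = ∏ i, (x - (hA.eigenvalues i : ℂ)) := by
        rw [Matrix.smul_one_eq_diagonal, diagonal_sub, det_diagonal]
        rfl

open Polynomial in
private lemma vNEntropy_eq_of_det {s t : Type*} [Fintype s] [Fintype t] [DecidableEq s] [DecidableEq t]
    {A : Matrix s s ℂ} {B : Matrix t t ℂ} (hA : A.IsHermitian) (hB : B.IsHermitian)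
    (h : ∀ x : ℂ, x ≠ 0 → x ^ (Fintype.card t) * (x • 1 - A).det
      = x ^ (Fintype.card s) * (x • 1 - B).det) :
    vNEntropy A = vNEntropy B := by
  classical
  set g : ℂ → ℝ := fun z => z.re * Real.log z.re with hg
  set Mα : Multiset ℂ := Finset.univ.val.map (fun i => (hA.eigenvalues i : ℂ)) with hMα
  set Mβ : Multiset ℂ := Finset.univ.val.map (fun i => (hB.eigenvalues i : ℂ)) with hMβ
  set p : ℂ[X] := X ^ (Fintype.card t) * (Mα.map (fun z => X - C z)).prod with hp
  set q : ℂ[X] := X ^ (Fintype.card s) * (Mβ.map (fun z => X - C z)).prod with hq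
  have evalprod : ∀ (M : Multiset ℂ) (x : ℂ),
      ((M.map (fun z => X - C z)).prod).eval x = (M.map (fun z => x - z)).prod := by
    intro M x
    rw [Polynomial.eval_multiset_prod, Multiset.map_map]
    congr 1
    apply Multiset.map_congr rfl
    intro z _
    simp
  have hpq : p = q := by
    apply Polynomial.eq_of_infinite_eval_eq
    apply Set.Infinite.mono (s := {(0:ℂ)}ᶜ)
    · intro x hx
      have hx0 : x ≠ 0 := hx
      have hd := h x hx0
      rw [det_smul_one_sub_eq_prod hA, det_smul_one_sub_eq_prod hB] at hd
      simp only [Set.mem_setOf_eq, hp, hq, eval_mul, eval_pow, eval_X, evalprod]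
      rw [hMα, hMβ, Multiset.map_map, Multiset.map_map]
      simpa using hd
    · exact (Set.finite_singleton (0:ℂ)).infinite_compl
  have hmonicα : (Mα.map (fun z => X - C z)).prod.Monic :=
    monic_multiset_prod_of_monic _ _ (fun z _ => monic_X_sub_C z)
  have hmonicβ : (Mβ.map (fun z => X - C z)).prod.Monic :=
    monic_multiset_prod_of_monic _ _ (fun z _ => monic_X_sub_C z)
  have hroots : (Fintype.card t) • ({0} : Multiset ℂ) + Mα
      = (Fintype.card s) • ({0} : Multiset ℂ) + Mβ := by
    have h1 : p.roots = (Fintype.card t) • ({0} : Multiset ℂ) + Mα := by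
      rw [hp, Polynomial.roots_mul (mul_ne_zero (pow_ne_zero _ X_ne_zero) hmonicα.ne_zero),
        Polynomial.roots_pow, Polynomial.roots_X, Polynomial.roots_multiset_prod_X_sub_C]
    have h2 : q.roots = (Fintype.card s) • ({0} : Multiset ℂ) + Mβ := by
      rw [hq, Polynomial.roots_mul (mul_ne_zero (pow_ne_zero _ X_ne_zero) hmonicβ.ne_zero),
        Polynomial.roots_pow, Polynomial.roots_X, Polynomial.roots_multiset_prod_X_sub_C]
    rw [← h1, ← h2, hpq]
  have hsum := congrArg (fun m : Multiset ℂ => (m.map g).sum) hroots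
  simp only [Multiset.map_add, Multiset.sum_add, Multiset.nsmul_singleton,
    Multiset.map_replicate, Multiset.sum_replicate] at hsum
  have hg0 : g 0 = 0 := by simp [hg]
  rw [hg0, smul_zero, smul_zero, zero_add, zero_add] at hsum
  have hA' : vNEntropy A = -(Mα.map g).sum := by
    rw [vNEntropy, dif_pos hA]
    congr 1
    rw [hMα, Multiset.map_map]
    rw [Finset.sum_eq_multiset_sum]
    exact congrArg Multiset.sum (Multiset.map_congr rfl (fun i _ => by simp [hg]))
  have hB' : vNEntropy B = -(Mβ.map g).sum := by
    rw [vNEntropy, dif_pos hB]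
    congr 1
    rw [hMβ, Multiset.map_map]
    rw [Finset.sum_eq_multiset_sum]
    exact congrArg Multiset.sum (Multiset.map_congr rfl (fun i _ => by simp [hg]))
  rw [hA', hB', hsum]

private lemma entropy_ptrace_symm {s t : Type*} [Fintype s] [Fintype t] [DecidableEq s] [DecidableEq t]
    (v : s × t → ℂ) :
    vNEntropy (ptraceRight (proj v)) = vNEntropy (ptraceLeft (proj v)) := by
  classical
  set M : Matrix s t ℂ := Matrix.of (fun i j => v (i, j)) with hM
  have hP : ptraceRight (proj v) = M * Mᴴ := by
    funext i j
    simp [ptraceRight, proj, Matrix.vecMulVec_apply, Matrix.mul_apply, hM,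
      Matrix.conjTranspose_apply]
  have hQ : ptraceLeft (proj v) = (Mᴴ * M)ᵀ := by
    funext i j
    simp [ptraceLeft, proj, Matrix.vecMulVec_apply, Matrix.mul_apply, hM,
      Matrix.conjTranspose_apply, Matrix.transpose_apply, mul_comm]
  have hHP : (M * Mᴴ).IsHermitian := Matrix.isHermitian_mul_conjTranspose_self M
  have hHQ : ((Mᴴ * M)ᵀ).IsHermitian := (Matrix.isHermitian_conjTranspose_mul_self M).transpose
  rw [hP, hQ]
  apply vNEntropy_eq_of_det hHP hHQ
  intro x hx
  have hdt : ∀ y : ℂ, (y • 1 - (Mᴴ * M)ᵀ).det = (y • 1 - Mᴴ * M).det := by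
    intro y
    rw [← Matrix.det_transpose (y • 1 - Mᴴ * M), Matrix.transpose_sub, Matrix.transpose_smul,
      Matrix.transpose_one]
  rw [hdt]
  have e1 : x • (1 : Matrix s s ℂ) - M * Mᴴ = x • ((1 : Matrix s s ℂ) - (x⁻¹ • M) * Mᴴ) := by
    rw [smul_sub, Matrix.smul_mul, smul_smul, mul_inv_cancel₀ hx, one_smul]
  have e2 : x • (1 : Matrix t t ℂ) - Mᴴ * M = x • ((1 : Matrix t t ℂ) - Mᴴ * (x⁻¹ • M)) := by
    rw [smul_sub, Matrix.mul_smul, smul_smul, mul_inv_cancel₀ hx, one_smul]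
  rw [e1, e2, Matrix.det_smul, Matrix.det_smul, Matrix.det_one_sub_mul_comm]
  ring

/-- `I_c(ρ,Φ) = S(ρ)` iff the Araki–Lieb inequality is saturated for
the `BC` marginal of the Stinespring-dilated pure state. -/
theorem coherent_information_max_iff_arakiLieb_saturation {a b c : Type*}
    [Fintype a] [Fintype b] [Fintype c] [DecidableEq a] [DecidableEq b] [DecidableEq c]
    (U : Matrix (b × c) (b × c) ℂ) (hU : U ∈ Matrix.unitaryGroup (b × c) ℂ)
    (ε : c → ℂ) (hε : IsUnit' ε)
    (Φ : Matrix b b ℂ → Matrix b b ℂ)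
    (hΦ : Φ = fun σ => ptraceRight (U * (σ ⊗ₖ proj ε) * Uᴴ))
    (ρ : Matrix b b ℂ) (hρ : IsDensity ρ)
    (u : a × b → ℂ) (hu : ptraceLeft (proj u) = ρ)
    (Ω : a × b × c → ℂ)
    (hΩ : Ω = fun p => ∑ q : b × c, U (p.2.1, p.2.2) q * u (p.1, q.1) * ε q.2) :
    vNEntropy (Φ ρ) - vNEntropy (idTensor Φ (proj u)) = vNEntropy ρ ↔
      vNEntropy (trAC (proj Ω)) - vNEntropy (ptraceLeft (ptraceLeft (proj Ω))) =
        vNEntropy (ptraceLeft (proj Ω)) := by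
  subst hΦ hu hΩ
  set R : Matrix b b ℂ := ptraceLeft (proj u) with hR
  set Ω : a × b × c → ℂ :=
    fun p => ∑ q : b × c, U (p.2.1, p.2.2) q * u (p.1, q.1) * ε q.2 with hΩ
  have hUU : Uᴴ * U = 1 := by
    simpa [Matrix.star_eq_conjTranspose] using Matrix.mem_unitaryGroup_iff'.mp hU
  set W : Matrix (b × c) a ℂ := Matrix.of (fun q x => u (x, q.1) * ε q.2) with hW
  have hUW : ∀ (r : b × c) (x : a), ∑ q : b × c, U r q * W q x = Ω (x, r.1, r.2) := by
    intro r x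
    rw [hΩ]
    exact Finset.sum_congr rfl fun q _ => by simp [hW]; ring
  have hWW : R ⊗ₖ proj ε = W * Wᴴ := by
    funext q q'
    simp only [Matrix.kroneckerMap_apply, hR, ptraceLeft, proj, Matrix.vecMulVec_apply,
      Pi.star_apply, Matrix.mul_apply, Matrix.conjTranspose_apply, hW, Matrix.of_apply]
    rw [Finset.sum_mul]
    exact Finset.sum_congr rfl fun x _ => by simp; ring
  have hassoc : U * (W * Wᴴ) * Uᴴ = (U * W) * (U * W)ᴴ := by
    rw [Matrix.conjTranspose_mul, ← Matrix.mul_assoc, ← Matrix.mul_assoc]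
  have hB : ptraceRight (U * (R ⊗ₖ proj ε) * Uᴴ) = trAC (proj Ω) := by
    rw [hWW, hassoc]
    funext i j
    simp only [ptraceRight, trAC, Matrix.mul_apply, Matrix.conjTranspose_apply, proj,
      Matrix.vecMulVec_apply, Pi.star_apply]
    rw [Finset.sum_comm]
    exact Finset.sum_congr rfl fun x _ => Finset.sum_congr rfl fun k _ => by
      rw [hUW (i, k) x, hUW (j, k) x]
  have houter : ∀ v w : (b × c) → ℂ,
      U * Matrix.vecMulVec v (star w) * Uᴴ
        = Matrix.vecMulVec (U *ᵥ v) (star (U *ᵥ w)) := by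
    intro v w
    funext p r
    simp only [Matrix.mul_apply, Matrix.vecMulVec_apply, Pi.star_apply,
      Matrix.conjTranspose_apply, Matrix.mulVec, dotProduct]
    rw [star_sum, Finset.sum_mul_sum]
    rw [Finset.sum_comm]
    refine Finset.sum_congr rfl fun q' _ => ?_
    rw [Finset.sum_mul]
    exact Finset.sum_congr rfl fun q _ => by simp; ring
  have hAB : idTensor (fun σ => ptraceRight (U * (σ ⊗ₖ proj ε) * Uᴴ)) (proj u)
      = trC (proj Ω) := by
    funext i j
    show ptraceRight
        (U * ((fun x y => proj u (i.1, x) (j.1, y)) ⊗ₖ proj ε) * Uᴴ) i.2 j.2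
      = trC (proj Ω) i j
    have hkron : ((fun x y => proj u (i.1, x) (j.1, y)) : Matrix b b ℂ) ⊗ₖ proj ε
        = Matrix.vecMulVec (fun q : b × c => u (i.1, q.1) * ε q.2)
            (star fun q : b × c => u (j.1, q.1) * ε q.2) := by
      funext q q'
      simp only [Matrix.kroneckerMap_apply, proj, Matrix.vecMulVec_apply, Pi.star_apply]
      simp [Matrix.kroneckerMap, Matrix.vecMulVec_apply]
      ring
    rw [hkron, houter]
    simp only [ptraceRight, trC, Matrix.vecMulVec_apply, Pi.star_apply, proj]
    refine Finset.sum_congr rfl fun k _ => ?_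
    have h1 : (U *ᵥ fun q : b × c => u (i.1, q.1) * ε q.2) (i.2, k) = Ω (i.1, i.2, k) := by
      rw [← hUW (i.2, k) i.1]
      simp [Matrix.mul_apply, Matrix.mulVec, dotProduct, hW]
    have h2 : (U *ᵥ fun q : b × c => u (j.1, q.1) * ε q.2) (j.2, k) = Ω (j.1, j.2, k) := by
      rw [← hUW (j.2, k) j.1]
      simp [Matrix.mul_apply, Matrix.mulVec, dotProduct, hW]
    rw [h1, h2]
  have hSC : vNEntropy (trC (proj Ω)) = vNEntropy (ptraceLeft (ptraceLeft (proj Ω))) := by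
    set v1 : (a × b) × c → ℂ := fun p => Ω (p.1.1, p.1.2, p.2) with hv1
    have e1 : trC (proj Ω) = ptraceRight (proj v1) := by
      funext i j
      simp [trC, ptraceRight, proj, Matrix.vecMulVec_apply, hv1]
    have e2 : ptraceLeft (ptraceLeft (proj Ω)) = ptraceLeft (proj v1) := by
      funext i j
      simp only [ptraceLeft, proj, Matrix.vecMulVec_apply, Pi.star_apply, hv1]
      rw [Fintype.sum_prod_type]
      rw [Finset.sum_comm]
    rw [e1, e2, entropy_ptrace_symm]
  have hSBC : vNEntropy (ptraceLeft (proj Ω)) = vNEntropy R := by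
    have e3 : ptraceRight (proj Ω) = ptraceRight (proj u) := by
      have key : (U * W)ᴴ * (U * W) = Wᴴ * W := by
        rw [Matrix.conjTranspose_mul, Matrix.mul_assoc, ← Matrix.mul_assoc Uᴴ U W, hUU,
          Matrix.one_mul]
      funext i j
      have lhs : ptraceRight (proj Ω) i j = ((U * W)ᴴ * (U * W)) j i := by
        simp only [ptraceRight, proj, Matrix.vecMulVec_apply, Pi.star_apply, Matrix.mul_apply,
          Matrix.conjTranspose_apply]
        exact Finset.sum_congr rfl fun r _ => by rw [hUW r i, hUW r j]; ring
      rw [lhs, key]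
      have hε1 : (∑ k : c, ε k * (starRingEnd ℂ) (ε k)) = 1 := by
        have : (∑ k : c, ε k * (starRingEnd ℂ) (ε k))
            = ((∑ k : c, Complex.normSq (ε k) : ℝ) : ℂ) := by
          push_cast
          exact Finset.sum_congr rfl fun k _ => by rw [Complex.mul_conj]
        rw [this, hε]
        norm_num
      simp only [ptraceRight, proj, Matrix.vecMulVec_apply, Pi.star_apply, Matrix.mul_apply,
        Matrix.conjTranspose_apply, hW, Matrix.of_apply]
      rw [Fintype.sum_prod_type]
      calc ∑ y : b, ∑ k : c, (starRingEnd ℂ) (u (j, y) * ε k) * (u (i, y) * ε k)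
          = ∑ y : b, (u (i, y) * (starRingEnd ℂ) (u (j, y)))
              * (∑ k : c, ε k * (starRingEnd ℂ) (ε k)) := by
            refine Finset.sum_congr rfl fun y _ => ?_
            rw [Finset.mul_sum]
            exact Finset.sum_congr rfl fun k _ => by simp; ring
        _ = ∑ y : b, u (i, y) * (starRingEnd ℂ) (u (j, y)) := by
            rw [hε1]; simp
    calc vNEntropy (ptraceLeft (proj Ω)) = vNEntropy (ptraceRight (proj Ω)) :=
          (entropy_ptrace_symm Ω).symm
      _ = vNEntropy (ptraceRight (proj u)) := by rw [e3]
      _ = vNEntropy (ptraceLeft (proj u)) := entropy_ptrace_symm u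
  beta_reduce
  rw [hB, hAB, hSC, hSBC]
end
end
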